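/- In the Coxeter graph Γ_{VB,n} with vertex set S = {x_{i,j} : 1 ≤ i ≠ j ≤ n}, the maximum cardinality of a subset X ⊆ S such that W_X is finite equals n − 1. (Here W_X is finite iff the underlying graph of Γ_X, whose edges are the pairs {x_{i,j}, x_{j,k}}, contains no cycle and no ∞-labeled edge, i.e., Γ_X is a disjoint union of type-A paths.) -/

import Mathlib

/-- The vertex set `S = {x_{i,j} : 1 ≤ i ≠ j ≤ n}` of the Coxeter graph
`Γ_{VB,n}` of the virtual braid kernel `K_n`. -/
def VBVertex (n : ℕ) : Type := {p : Fin n × Fin n // p.1 ≠ p.2}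

/-- Ordinary (label-3) edges of `Γ_{VB,n}`: `x_{i,j}` and `x_{j,k}` are joined
by an edge labeled 3 for `i, j, k` distinct. -/
def vbOrdEdge {n : ℕ} (p q : VBVertex n) : Prop :=
  (p.1.2 = q.1.1 ∧ p.1.1 ≠ q.1.2) ∨ (q.1.2 = p.1.1 ∧ q.1.1 ≠ p.1.2)

/-- The `∞`-labeled edges of `Γ_{VB,n}`. -/
def vbInfEdge {n : ℕ} (p q : VBVertex n) : Prop :=
  p ≠ q ∧ (p.1.1 = q.1.1 ∨ p.1.2 = q.1.2 ∨ (p.1.2 = q.1.1 ∧ p.1.1 = q.1.2))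

/-- The underlying simple graph of the ordinary edges of `Γ_{VB,n}`. -/
def vbGraph (n : ℕ) : SimpleGraph (VBVertex n) where
  Adj p q := vbOrdEdge p q
  symm := by
    constructor
    intro p q h
    unfold vbOrdEdge at *
    tauto
  loopless := by
    constructor
    intro p h
    rcases h with ⟨h₁, h₂⟩ | ⟨h₁, h₂⟩ <;> exact h₂ h₁.symm

/-- `W_X` is finite iff `Γ_X` has no `∞`-labeled edge and the underlying graph
of `Γ_X` contains no cycle, i.e. `Γ_X` is a disjoint union of type-`A` paths. -/
def vbSpherical {n : ℕ} (X : Set (VBVertex n)) : Prop :=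
  (∀ p ∈ X, ∀ q ∈ X, ¬ vbInfEdge p q) ∧ ((vbGraph n).induce X).IsAcyclic

instance (n : ℕ) : Finite (VBVertex n) := by unfold VBVertex; infer_instance

/-- A graph with an injective integer grading whose edges connect consecutive
levels is acyclic. -/
lemma vb_aux_acyclic {V : Type*} (G : SimpleGraph V) (f : V → ℤ)
    (hinj : Function.Injective f)
    (hadj : ∀ u v, G.Adj u v → f v = f u + 1 ∨ f u = f v + 1) : G.IsAcyclic := by
  have key : ∀ u v : V, G.Adj u v → f v = f u + 1 →
      ¬ (G \ SimpleGraph.fromEdgeSet {s(u, v)}).Reachable u v := by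
    rintro u v huv hfv ⟨w⟩
    have step : ∀ x y : V, (G \ SimpleGraph.fromEdgeSet {s(u, v)}).Adj x y →
        f x ≤ f u → f y ≤ f u := by
      intro x y hxy hx
      rw [SimpleGraph.sdiff_adj, SimpleGraph.fromEdgeSet_adj] at hxy
      obtain ⟨hG, hne⟩ := hxy
      by_contra hy
      push_neg at hy
      rcases hadj x y hG with h | h
      · have hx' : x = u := hinj (by omega)
        have hy' : y = v := hinj (by omega)
        subst hx' hy'
        exact hne ⟨by simp, huv.ne⟩
      · omega
    have walkinv : ∀ {x y : V} (_ : (G \ SimpleGraph.fromEdgeSet {s(u, v)}).Walk x y),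
        f x ≤ f u → f y ≤ f u := by
      intro x y w
      induction w with
      | nil => exact id
      | cons h p ih => intro hx; exact ih (step _ _ h hx)
    have := walkinv w le_rfl
    omega
  rw [SimpleGraph.isAcyclic_iff_forall_adj_isBridge]
  intro u v huv
  rw [SimpleGraph.isBridge_iff]
  rcases hadj u v huv with h | h
  · exact key u v huv h
  · intro hr
    have hk := key v u huv.symm h
    rw [Sym2.eq_swap] at hk
    exact hk hr.symm

/-- The `i`-th vertex `x_{i,i+1}` of the standard type-`A` path in `Γ_{VB,n}`. -/
def vbPathVert (n : ℕ) (i : Fin (n - 1)) : VBVertex n :=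
  ⟨(⟨i.1, by have := i.2; omega⟩, ⟨i.1 + 1, by have := i.2; omega⟩), by
    intro h
    have := congrArg Fin.val h
    simp at this⟩

lemma vbPathVert_injective (n : ℕ) : Function.Injective (vbPathVert n) := by
  intro i j h
  have := congrArg (fun p => (p : VBVertex n).1.1.1) h
  simp only [vbPathVert] at this
  exact Fin.ext this

theorem vb_spherical_max_card (n : ℕ) :
    IsGreatest {k : ℕ | ∃ X : Set (VBVertex n), vbSpherical X ∧ X.ncard = k}
      (n - 1) := by
  constructor
  · -- membership: the standard path achieves n - 1
    refine ⟨Set.range (vbPathVert n), ⟨?_, ?_⟩, ?_⟩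
    · rintro p ⟨i, rfl⟩ q ⟨j, rfl⟩ ⟨hne, hor⟩
      have hij : i.1 ≠ j.1 := fun h => hne (congrArg _ (Fin.ext h))
      rcases hor with h | h | ⟨h1, h2⟩
      · have := congrArg Fin.val h
        simp only [vbPathVert] at this
        omega
      · have := congrArg Fin.val h
        simp only [vbPathVert] at this
        omega
      · have h1' := congrArg Fin.val h1
        have h2' := congrArg Fin.val h2
        simp only [vbPathVert] at h1' h2'
        omega
    · apply vb_aux_acyclic _ (fun p => ((p.1.1.1.1 : ℕ) : ℤ))
      · intro p q h
        obtain ⟨i, hi⟩ := p.2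
        obtain ⟨j, hj⟩ := q.2
        have : i = j := by
          apply Fin.ext
          have hi' := congrArg (fun r : VBVertex n => r.1.1.1) hi
          have hj' := congrArg (fun r : VBVertex n => r.1.1.1) hj
          simp only [vbPathVert] at hi' hj'
          have h2 : ((p.1.1.1.1 : ℕ) : ℤ) = ((q.1.1.1.1 : ℕ) : ℤ) := h
          have h3 : (p.1.1.1.1 : ℕ) = q.1.1.1.1 := by exact_mod_cast h2
          rw [← hi', ← hj'] at h3
          exact h3
        subst this
        exact Subtype.ext (hi.symm.trans hj)
      · intro p q h
        have h' : vbOrdEdge p.1 q.1 := h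
        obtain ⟨i, hi⟩ := p.2
        obtain ⟨j, hj⟩ := q.2
        have hp1 : (p.1.1.1.1 : ℕ) = i.1 := by rw [← hi]; rfl
        have hq1 : (q.1.1.1.1 : ℕ) = j.1 := by rw [← hj]; rfl
        have hp2 : (p.1.1.2.1 : ℕ) = i.1 + 1 := by rw [← hi]; rfl
        have hq2 : (q.1.1.2.1 : ℕ) = j.1 + 1 := by rw [← hj]; rfl
        rcases h' with ⟨h1, _⟩ | ⟨h1, _⟩
        · left
          have := congrArg Fin.val h1
          omega
        · right
          have := congrArg Fin.val h1
          omega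
    · rw [← Nat.card_coe_set_eq, Nat.card_range_of_injective (vbPathVert_injective n)]
      simp
  · -- upper bound
    rintro k ⟨X, ⟨hinf, hacyc⟩, rfl⟩
    have hfst : Function.Injective (fun p : ↥X => p.1.1.1) := by
      intro p q h
      by_contra hne
      exact hinf p.1 p.2 q.1 q.2 ⟨fun e => hne (Subtype.ext e), Or.inl h⟩
    have hsnd : Function.Injective (fun p : ↥X => p.1.1.2) := by
      intro p q h
      by_contra hne
      exact hinf p.1 p.2 q.1 q.2 ⟨fun e => hne (Subtype.ext e), Or.inr (Or.inl h)⟩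
    have hle : X.ncard ≤ n := by
      rw [← Nat.card_coe_set_eq]
      calc Nat.card ↥X ≤ Nat.card (Fin n) := Nat.card_le_card_of_injective _ hfst
        _ = n := by simp
    by_cases hn : n = 0
    · omega
    rcases Nat.lt_or_ge X.ncard n with hlt | hge
    · omega
    have hcard : X.ncard = n := le_antisymm hle hge
    exfalso
    haveI : Fintype (VBVertex n) := Fintype.ofFinite _
    haveI : Fintype ↥X := Fintype.ofFinite _
    have hcards : Fintype.card ↥X = Fintype.card (Fin n) := by
      rw [Fintype.card_fin, ← Nat.card_eq_fintype_card, Nat.card_coe_set_eq, hcard]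
    have hbf : Function.Bijective (fun p : ↥X => p.1.1.1) :=
      (Fintype.bijective_iff_injective_and_card _).2 ⟨hfst, by simpa using hcards⟩
    have hbs : Function.Bijective (fun p : ↥X => p.1.1.2) :=
      (Fintype.bijective_iff_injective_and_card _).2 ⟨hsnd, by simpa using hcards⟩
    let e1 := Equiv.ofBijective _ hbf
    let e2 := Equiv.ofBijective _ hbs
    let σ : Equiv.Perm (Fin n) := e1.symm.trans e2
    let u : Fin n → ↥X := fun i => e1.symm i
    have huinj : Function.Injective u := e1.symm.injective
    have hu1 : ∀ i, (u i).1.1.1 = i := fun i => e1.apply_symm_apply i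
    have hu2 : ∀ i, (u i).1.1.2 = σ i := fun i => rfl
    have hne1 : ∀ i, σ i ≠ i := by
      intro i h
      exact (u i).1.2 (by rw [hu1, hu2]; exact h.symm)
    have hne2 : ∀ i, σ (σ i) ≠ i := by
      intro i h
      have hne : u i ≠ u (σ i) := fun e => hne1 i (huinj e ▸ rfl)
      refine hinf (u i).1 (u i).2 (u (σ i)).1 (u (σ i)).2
        ⟨fun e => hne (Subtype.ext e), Or.inr (Or.inr ⟨?_, ?_⟩)⟩
      · rw [hu2, hu1]
      · rw [hu1, hu2]; exact h.symm
    have hadj : ∀ i, ((vbGraph n).induce X).Adj (u i) (u (σ i)) := by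
      intro i
      show vbOrdEdge (u i).1 (u (σ i)).1
      refine Or.inl ⟨?_, ?_⟩
      · rw [hu2, hu1]
      · rw [hu1, hu2]; exact (hne2 i).symm
    set i₀ : Fin n := ⟨0, Nat.pos_of_ne_zero hn⟩ with hi₀
    have hbridge := (SimpleGraph.isAcyclic_iff_forall_adj_isBridge.1 hacyc) (hadj i₀)
    rw [SimpleGraph.isBridge_iff] at hbridge
    apply hbridge
    set G' := ((vbGraph n).induce X) \ SimpleGraph.fromEdgeSet {s(u i₀, u (σ i₀))} with hG'
    set m := Function.minimalPeriod (⇑σ) i₀ with hm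
    have hper : Function.IsPeriodicPt (⇑σ) (orderOf σ) i₀ := by
      show (⇑σ)^[orderOf σ] i₀ = i₀
      rw [Equiv.Perm.iterate_eq_pow, pow_orderOf_eq_one]
      rfl
    have hm0 : 0 < m := hper.minimalPeriod_pos (orderOf_pos σ)
    have hmlt : ∀ k, 0 < k → k < m → (⇑σ)^[k] i₀ ≠ i₀ := by
      intro k hk hkm he
      exact absurd (Function.IsPeriodicPt.minimalPeriod_le hk he) (by omega)
    have hstep : ∀ j : Fin n, j ≠ i₀ → G'.Adj (u j) (u (σ j)) := by
      intro j hj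
      rw [hG', SimpleGraph.sdiff_adj, SimpleGraph.fromEdgeSet_adj]
      refine ⟨hadj j, ?_⟩
      rintro ⟨he, -⟩
      rw [Set.mem_singleton_iff, Sym2.eq_iff] at he
      rcases he with ⟨h1, -⟩ | ⟨h1, h2⟩
      · exact hj (huinj h1)
      · exact hne2 i₀ (huinj h1 ▸ huinj h2)
    have reach : ∀ k, 1 ≤ k → k ≤ m → G'.Reachable (u (σ i₀)) (u ((⇑σ)^[k] i₀)) := by
      intro k
      induction k with
      | zero => omega
      | succ k ih =>
        intro _ hk1
        rcases Nat.eq_zero_or_pos k with rfl | hkpos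
        · rw [Function.iterate_one]
        · refine (ih hkpos (by omega)).trans ?_
          rw [Function.iterate_succ_apply']
          exact SimpleGraph.Adj.reachable (hstep _ (hmlt k hkpos (by omega)))
    have hfin := reach m (by omega) le_rfl
    rw [hm, Function.iterate_minimalPeriod] at hfin
    exact hfin.symm
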